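/- Let E_ε = {x : xᵀPx ≤ ε} and E_C = {x : xᵀPx ≤ 1} with P symmetric positive definite and 0 < ε < 1. Then E_ε is contained in the interior of E_C, and the Euclidean distance from E_ε to the boundary of E_C is at least (1 - √ε)/√(λ_max(P)). -/

import Mathlib

open Matrix

lemma aux_tri {n : ℕ} (P : Matrix (Fin n) (Fin n) ℝ) (hP : P.PosDef) (a b : Fin n → ℝ) :
    Real.sqrt ((a + b) ⬝ᵥ P *ᵥ (a + b)) ≤
      Real.sqrt (a ⬝ᵥ P *ᵥ a) + Real.sqrt (b ⬝ᵥ P *ᵥ b) := by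
  letI nacg := Matrix.toNormedAddCommGroup P hP
  letI ips := Matrix.toInnerProductSpace P hP.posSemidef
  have key : ∀ v : Fin n → ℝ, Real.sqrt (v ⬝ᵥ P *ᵥ v) = @norm _ nacg.toNorm v := by
    intro v
    have h := @norm_eq_sqrt_real_inner _ nacg.toSeminormedAddCommGroup ips v
    rw [show (inner ℝ v v : ℝ) = star v ⬝ᵥ P *ᵥ v from (dotProduct_comm (P *ᵥ v) (star v) : _), show star v = v from by simp] at h
    exact h.symm
  rw [key, key, key]
  exact @norm_add_le _ (@SeminormedAddCommGroup.toSeminormedAddGroup _ (@NormedAddCommGroup.toSeminormedAddCommGroup _ nacg)) a b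

lemma aux_ray {n : ℕ} (P : Matrix (Fin n) (Fin n) ℝ) (hP : P.PosDef)
    (lmax : ℝ) (hub : lmax ∈ upperBounds (spectrum ℝ P)) (v : Fin n → ℝ) :
    v ⬝ᵥ P *ᵥ v ≤ lmax * (v ⬝ᵥ v) := by
  classical
  have hH := hP.1
  set U : Matrix (Fin n) (Fin n) ℝ := (hH.eigenvectorUnitary : Matrix (Fin n) (Fin n) ℝ) with hU
  set y : Fin n → ℝ := star U *ᵥ v with hy
  have hUs : U * star U = 1 := (Matrix.mem_unitaryGroup_iff).mp hH.eigenvectorUnitary.2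
  have hvU : v ᵥ* U = star U *ᵥ v := by
    rw [show (star U : Matrix (Fin n) (Fin n) ℝ) = Uᵀ by
      simp [Matrix.star_eq_conjTranspose, Matrix.conjTranspose_eq_transpose_of_trivial]]
    rw [Matrix.mulVec_transpose]
  have key : ∀ M : Matrix (Fin n) (Fin n) ℝ, y ⬝ᵥ M *ᵥ y = v ⬝ᵥ (U * M * star U) *ᵥ v := by
    intro M
    rw [hy]
    conv_rhs => rw [Matrix.mul_assoc, ← Matrix.mulVec_mulVec, Matrix.dotProduct_mulVec, hvU,
      ← Matrix.mulVec_mulVec]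
  have hD : Matrix.diagonal ((RCLike.ofReal : ℝ → ℝ) ∘ hH.eigenvalues)
      = Matrix.diagonal hH.eigenvalues := by
    congr 1
  have h1 : v ⬝ᵥ P *ᵥ v = y ⬝ᵥ (Matrix.diagonal hH.eigenvalues) *ᵥ y := by
    rw [key]
    conv_lhs => rw [hH.spectral_theorem]
    rw [hD]
    rfl
  have h2 : v ⬝ᵥ v = y ⬝ᵥ y := by
    have := key 1
    rw [Matrix.mul_one, hUs] at this
    simpa using this.symm
  rw [h1, h2]
  have hle : ∀ i, hH.eigenvalues i ≤ lmax := fun i =>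
    hub (hH.eigenvalues_mem_spectrum_real i)
  have hr : lmax * (y ⬝ᵥ y) = ∑ i, lmax * (y i * y i) := by
    rw [dotProduct, Finset.mul_sum]
  rw [hr, dotProduct]
  apply Finset.sum_le_sum
  intro i _
  rw [Matrix.mulVec_diagonal]
  nlinarith [hle i, mul_self_nonneg (y i)]


/-- Safety margin between the inner safe set and the safe set: with `P` symmetric positive
definite, `0 < ε < 1`, and `λ_max` the largest eigenvalue of `P` (a greatest element of its
real spectrum), `E_ε = {x : xᵀPx ≤ ε}` lies in the interior of `E_C = {x : xᵀPx ≤ 1}`, and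
the Euclidean distance from any point of `E_ε` to any point of the boundary of `E_C` is at
least `(1 - √ε)/√λ_max`. -/
theorem stmt_17 {n : ℕ} (P : Matrix (Fin n) (Fin n) ℝ) (hP : P.PosDef)
    (ε : ℝ) (hε : 0 < ε) (hε1 : ε < 1)
    (lmax : ℝ) (hlmax : IsGreatest (spectrum ℝ P) lmax) :
    {x : Fin n → ℝ | x ⬝ᵥ P *ᵥ x ≤ ε} ⊆ interior {x : Fin n → ℝ | x ⬝ᵥ P *ᵥ x ≤ 1} ∧
    ∀ x ∈ {x : Fin n → ℝ | x ⬝ᵥ P *ᵥ x ≤ ε},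
      ∀ y ∈ frontier {x : Fin n → ℝ | x ⬝ᵥ P *ᵥ x ≤ 1},
        (1 - Real.sqrt ε) / Real.sqrt lmax ≤ Real.sqrt (∑ i, (x i - y i) ^ 2) := by
  classical
  have hf : Continuous fun x : Fin n → ℝ => x ⬝ᵥ P *ᵥ x :=
    continuous_id.dotProduct (continuous_const.matrix_mulVec continuous_id)
  have hl0 : 0 < lmax := by
    rcases Nat.eq_zero_or_pos n with h0 | hpos
    · subst h0
      have hs : Subsingleton (Matrix (Fin 0) (Fin 0) ℝ) :=
        ⟨fun A B => by ext i; exact i.elim0⟩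
      exact absurd (isUnit_of_subsingleton _) (spectrum.mem_iff.mp hlmax.1)
    · have i : Fin n := ⟨0, hpos⟩
      exact lt_of_lt_of_le (hP.eigenvalues_pos i)
        (hlmax.2 (hP.1.eigenvalues_mem_spectrum_real i))
  constructor
  · intro x hx
    have hsub : {z : Fin n → ℝ | z ⬝ᵥ P *ᵥ z < 1} ⊆
        interior {z : Fin n → ℝ | z ⬝ᵥ P *ᵥ z ≤ 1} :=
      interior_maximal (fun z hz => show z ⬝ᵥ P *ᵥ z ≤ 1 from le_of_lt hz) (isOpen_lt hf continuous_const)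
    exact hsub (lt_of_le_of_lt hx hε1)
  · intro x hx y hy
    have hy1 : y ⬝ᵥ P *ᵥ y = 1 := frontier_le_subset_eq hf continuous_const hy
    have h1 : Real.sqrt (y ⬝ᵥ P *ᵥ y) = 1 := by rw [hy1, Real.sqrt_one]
    have hxs : Real.sqrt (x ⬝ᵥ P *ᵥ x) ≤ Real.sqrt ε := Real.sqrt_le_sqrt hx
    have htri := aux_tri P hP (y - x) x
    rw [sub_add_cancel] at htri
    have hd : (y - x) ⬝ᵥ P *ᵥ (y - x) ≤ lmax * ((y - x) ⬝ᵥ (y - x)) :=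
      aux_ray P hP lmax hlmax.2 (y - x)
    have hdot : (y - x) ⬝ᵥ (y - x) = ∑ i, (x i - y i) ^ 2 := by
      unfold dotProduct
      apply Finset.sum_congr rfl
      intro i _
      simp only [Pi.sub_apply]
      ring
    have hsq : Real.sqrt ((y - x) ⬝ᵥ P *ᵥ (y - x)) ≤
        Real.sqrt lmax * Real.sqrt (∑ i, (x i - y i) ^ 2) := by
      rw [← hdot, ← Real.sqrt_mul (le_of_lt hl0)]
      exact Real.sqrt_le_sqrt hd
    have hfin : 1 - Real.sqrt ε ≤ Real.sqrt lmax * Real.sqrt (∑ i, (x i - y i) ^ 2) := by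
      have := h1 ▸ htri
      linarith
    rw [div_le_iff₀ (Real.sqrt_pos.mpr hl0)]
    linarith
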